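/- arXiv:1606.03891 — 8 statements merged into one kernel-verified Lean document; each statement's English description precedes it below -/
import Mathlib

section
/- Let P > 0, let u : ℝ → ℝ be twice continuously differentiable and periodic with period 2P, let A, Ĉ, D̂, U be real constants with A ≠ 0, suppose for all θ both A·u'(θ)² = 2D̂ + 2Ĉ·u(θ) + U·u(θ)² − (1/3)u(θ)³ and A·u''(θ) = Ĉ + U·u(θ) − (1/2)u(θ)², and let d = (1/(2P))∫_{−P}^{P} u(θ) dθ. Then (1/(2P))∫_{−P}^{P} A·u'(θ)² dθ = (2/5)·(3D̂ + 2Ĉd + U(Ĉ + Ud)). -/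
open intervalIntegral MeasureTheory

private lemma integral_poly3 (a b c0 c1 c2 c3 : ℝ) (f : ℝ → ℝ) (hf : Continuous f) :
    ∫ θ in a..b, (c0 + c1 * f θ + c2 * (f θ) ^ 2 + c3 * (f θ) ^ 3) =
      c0 * (b - a) + c1 * (∫ θ in a..b, f θ) + c2 * (∫ θ in a..b, (f θ) ^ 2)
        + c3 * (∫ θ in a..b, (f θ) ^ 3) := by
  have h0 : IntervalIntegrable (fun θ => (c0 : ℝ)) volume a b :=
    intervalIntegrable_const
  have h1 : IntervalIntegrable (fun θ => c1 * f θ) volume a b :=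
    ((continuous_const.mul hf)).intervalIntegrable a b
  have h2 : IntervalIntegrable (fun θ => c2 * (f θ) ^ 2) volume a b :=
    ((continuous_const.mul (hf.pow 2))).intervalIntegrable a b
  have h3 : IntervalIntegrable (fun θ => c3 * (f θ) ^ 3) volume a b :=
    ((continuous_const.mul (hf.pow 3))).intervalIntegrable a b
  rw [intervalIntegral.integral_add ((h0.add h1).add h2) h3,
    intervalIntegral.integral_add (h0.add h1) h2,
    intervalIntegral.integral_add h0 h1,
    intervalIntegral.integral_const,
    intervalIntegral.integral_const_mul, intervalIntegral.integral_const_mul,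
    intervalIntegral.integral_const_mul]
  simp [smul_eq_mul]
  ring

/-- For a `C²` periodic solution of both the first-integral relation
`A u'² = 2D̂ + 2Ĉ u + U u² − u³/3` and the second-integral relation
`A u'' = Ĉ + U u − u²/2`, with mean value `d`, the mean of `A u'²` over a period
is `(2/5)(3D̂ + 2Ĉ d + U(Ĉ + U d))`. -/
theorem stmt_3 (P : ℝ) (hP : 0 < P) (u : ℝ → ℝ) (A C D U d : ℝ)
    (hu : ContDiff ℝ 2 u) (hper : Function.Periodic u (2 * P)) (hA : A ≠ 0)
    (hfirst : ∀ θ : ℝ, A * (deriv u θ) ^ 2 =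
      2 * D + 2 * C * u θ + U * (u θ) ^ 2 - (1 / 3) * (u θ) ^ 3)
    (hsecond : ∀ θ : ℝ, A * deriv (deriv u) θ = C + U * u θ - (1 / 2) * (u θ) ^ 2)
    (hd : d = (1 / (2 * P)) * ∫ θ in (-P)..P, u θ) :
    (1 / (2 * P)) * ∫ θ in (-P)..P, A * (deriv u θ) ^ 2 =
      (2 / 5) * (3 * D + 2 * C * d + U * (C + U * d)) := by
  have hcu : Continuous u := hu.continuous
  have hdu : Differentiable ℝ u := hu.differentiable (by norm_num)
  have hu1 : ContDiff ℝ 1 (deriv u) := by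
    have := (contDiff_succ_iff_deriv (n := 1)).mp (by exact_mod_cast hu)
    exact this.2.2
  have hddu : Differentiable ℝ (deriv u) := hu1.differentiable one_ne_zero
  have hcu' : Continuous (deriv u) := hu1.continuous
  have hcu'' : Continuous (deriv (deriv u)) := hu1.continuous_deriv le_rfl
  -- periodicity of deriv u
  have hperfun : (fun y => u (y + 2 * P)) = u := funext hper
  have hperd : deriv u P = deriv u (-P) := by
    have h := deriv_comp_add_const u (2 * P) (-P)
    rw [hperfun, show -P + 2 * P = P by ring] at h
    exact h.symm
  have huP : u P = u (-P) := by
    have := hper (-P); rwa [show -P + 2 * P = P by ring] at this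
  set S1 := ∫ θ in (-P)..P, u θ with hS1
  set S2 := ∫ θ in (-P)..P, (u θ) ^ 2 with hS2
  set S3 := ∫ θ in (-P)..P, (u θ) ^ 3 with hS3
  set M := ∫ θ in (-P)..P, A * (deriv u θ) ^ 2 with hM
  -- E1 : from hfirst
  have E1 : M = 2 * D * (P - (-P)) + 2 * C * S1 + U * S2 - (1/3) * S3 := by
    have hcongr : M = ∫ θ in (-P)..P,
        (2 * D + 2 * C * u θ + U * (u θ) ^ 2 + (-(1/3)) * (u θ) ^ 3) := by
      rw [hM]
      apply intervalIntegral.integral_congr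
      intro θ _
      have := hfirst θ; simp only; linarith
    rw [hcongr, integral_poly3 _ _ _ _ _ _ _ hcu]
    ring
  -- integral of u'' is zero
  have e0 : ∫ θ in (-P)..P, deriv (deriv u) θ = 0 := by
    rw [intervalIntegral.integral_deriv_eq_sub (fun x _ => hddu x)
      (hcu''.intervalIntegrable _ _), hperd, sub_self]
  -- E3 : integrate hsecond
  have E3 : (0 : ℝ) = C * (P - (-P)) + U * S1 - (1/2) * S2 := by
    have h1 : ∫ θ in (-P)..P, A * deriv (deriv u) θ
        = ∫ θ in (-P)..P, (C + U * u θ + (-(1/2)) * (u θ) ^ 2 + 0 * (u θ) ^ 3) := by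
      apply intervalIntegral.integral_congr
      intro θ _
      have := hsecond θ; simp only; linarith
    rw [intervalIntegral.integral_const_mul, e0, mul_zero] at h1
    rw [integral_poly3 _ _ _ _ _ _ _ hcu] at h1
    rw [h1]; ring
  -- integration by parts: ∫ (u'^2 + u u'') = 0
  have eparts : ∫ θ in (-P)..P, ((deriv u θ) ^ 2 + u θ * deriv (deriv u) θ) = 0 := by
    have hder : ∀ x ∈ Set.uIcc (-P) P, HasDerivAt (fun θ => u θ * deriv u θ)
        ((deriv u x) ^ 2 + u x * deriv (deriv u) x) x := by
      intro x _
      have h1 : HasDerivAt u (deriv u x) x := (hdu x).hasDerivAt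
      have h2 : HasDerivAt (deriv u) (deriv (deriv u) x) x := (hddu x).hasDerivAt
      have := h1.mul h2
      have e : (deriv u x) ^ 2 + u x * deriv (deriv u) x
          = deriv u x * deriv u x + u x * deriv (deriv u) x := by ring
      rw [e]; exact this
    have hint : IntervalIntegrable
        (fun x => (deriv u x) ^ 2 + u x * deriv (deriv u) x) volume (-P) P :=
      ((hcu'.pow 2).add (hcu.mul hcu'')).intervalIntegrable _ _
    rw [intervalIntegral.integral_eq_sub_of_hasDerivAt hder hint, huP, hperd, sub_self]
  -- E2 : multiply hsecond by u and integrate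
  have E2 : -M = C * S1 + U * S2 - (1/2) * S3 := by
    have h1 : ∫ θ in (-P)..P, A * (u θ * deriv (deriv u) θ)
        = ∫ θ in (-P)..P, (0 + C * u θ + U * (u θ) ^ 2 + (-(1/2)) * (u θ) ^ 3) := by
      apply intervalIntegral.integral_congr
      intro θ _
      have h := hsecond θ; simp only
      linear_combination u θ * h
    rw [intervalIntegral.integral_const_mul, integral_poly3 _ _ _ _ _ _ _ hcu] at h1
    -- ∫ u u'' = -∫ u'^2
    have h2 : ∫ θ in (-P)..P, u θ * deriv (deriv u) θ
        = - ∫ θ in (-P)..P, (deriv u θ) ^ 2 := by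
      have := intervalIntegral.integral_add (μ := volume)
        ((hcu'.pow 2).intervalIntegrable (-P) P)
        ((hcu.mul hcu'').intervalIntegrable (-P) P)
      simp only [Pi.pow_apply, Pi.mul_apply] at this
      rw [eparts] at this
      linarith
    have h3 : M = A * ∫ θ in (-P)..P, (deriv u θ) ^ 2 := by
      rw [hM, intervalIntegral.integral_const_mul]
    rw [h2] at h1
    rw [h3]; linarith [h1]
  -- combine
  have hMeq : 5 * M = 12 * P * D + 4 * C * S1 + 4 * P * U * C + 2 * U ^ 2 * S1 := by
    linear_combination 3 * E1 - 2 * E2 + 2 * U * E3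
  rw [hd]
  have h2P : (2 * P) ≠ 0 := by positivity
  field_simp
  clear_value S1 S2 S3 M
  linear_combination hMeq
end

section
/- Let P > 0, let u : ℝ → ℝ be twice continuously differentiable and periodic with period 2P, let A, Ĉ, D̂, U be real constants with A ≠ 0, suppose for all θ both A·u'(θ)² = 2D̂ + 2Ĉ·u(θ) + U·u(θ)² − (1/3)u(θ)³ and A·u''(θ) = Ĉ + U·u(θ) − (1/2)u(θ)², and let d = (1/(2P))∫_{−P}^{P} u(θ) dθ. Then (1/(2P))∫_{−P}^{P} A²·u''(θ)² dθ = (1/7)·(6D̂d + 8Ĉ² + U(−6D̂ + 6Ĉd + 2UĈ + 2U²d)). -/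
open intervalIntegral MeasureTheory


/-- For a `C²` periodic solution of both the first-integral relation
`A u'² = 2D̂ + 2Ĉ u + U u² − u³/3` and the second-integral relation
`A u'' = Ĉ + U u − u²/2`, with mean value `d`, the mean of `A² u''²` over a
period is `(1/7)(6D̂ d + 8Ĉ² + U(−6D̂ + 6Ĉ d + 2UĈ + 2U² d))`. -/
theorem stmt_4 (P : ℝ) (hP : 0 < P) (u : ℝ → ℝ) (A C D U d : ℝ)
    (hu : ContDiff ℝ 2 u) (hper : Function.Periodic u (2 * P)) (hA : A ≠ 0)
    (hfirst : ∀ θ : ℝ, A * (deriv u θ) ^ 2 =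
      2 * D + 2 * C * u θ + U * (u θ) ^ 2 - (1 / 3) * (u θ) ^ 3)
    (hsecond : ∀ θ : ℝ, A * deriv (deriv u) θ = C + U * u θ - (1 / 2) * (u θ) ^ 2)
    (hd : d = (1 / (2 * P)) * ∫ θ in (-P)..P, u θ) :
    (1 / (2 * P)) * ∫ θ in (-P)..P, A ^ 2 * (deriv (deriv u) θ) ^ 2 =
      (1 / 7) * (6 * D * d + 8 * C ^ 2 +
        U * (-6 * D + 6 * C * d + 2 * U * C + 2 * U ^ 2 * d)) := by
  -- regularity facts
  have hdu : Differentiable ℝ u := hu.differentiable (by norm_num)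
  have hcd1 : ContDiff ℝ 1 (deriv u) := by
    have := (contDiff_succ_iff_deriv.mp (show ContDiff ℝ ((1:ℕ)+1) u by exact_mod_cast hu)).2.2
    exact_mod_cast this
  have hddu : Differentiable ℝ (deriv u) := hcd1.differentiable one_ne_zero
  have cu : Continuous u := hdu.continuous
  have cdu : Continuous (deriv u) := hddu.continuous
  have cddu : Continuous (deriv (deriv u)) := hcd1.continuous_deriv le_rfl
  have hperd : ∀ x, deriv u (x + 2 * P) = deriv u x := by
    intro x
    have h : (fun y => u (y + 2 * P)) = u := funext hper
    rw [← deriv_comp_add_const, h]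
  -- integral of a derivative of a periodic function over a period vanishes
  have zero_int : ∀ (g g' : ℝ → ℝ), (∀ x, HasDerivAt g (g' x) x) → Continuous g' →
      (∀ x, g (x + 2 * P) = g x) → (∫ θ in (-P)..P, g' θ) = 0 := by
    intro g g' hg hc hp
    rw [intervalIntegral.integral_eq_sub_of_hasDerivAt (fun x _ => hg x)
      (hc.intervalIntegrable _ _)]
    have h2 : g (-P + 2 * P) = g (-P) := hp (-P)
    rw [show -P + 2 * P = P by ring] at h2
    rw [h2, sub_self]
  -- the three vanishing integrals
  have H0 : (∫ θ in (-P)..P, deriv (deriv u) θ) = 0 :=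
    zero_int (deriv u) _ (fun x => (hddu x).hasDerivAt) cddu hperd
  have H1 : (∫ θ in (-P)..P,
      (deriv (deriv u) θ * u θ + deriv u θ * deriv u θ)) = 0 := by
    refine zero_int (fun θ => deriv u θ * u θ) _
      (fun x => ((hddu x).hasDerivAt.mul (hdu x).hasDerivAt)) (by fun_prop) ?_
    intro x
    show deriv u (x + 2 * P) * u (x + 2 * P) = deriv u x * u x
    rw [hperd x, hper x]
  have H2 : (∫ θ in (-P)..P,
      (deriv (deriv u) θ * u θ ^ 2 + deriv u θ * (2 * u θ ^ 1 * deriv u θ))) = 0 := by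
    refine zero_int (fun θ => deriv u θ * u θ ^ 2) _
      (fun x => ((hddu x).hasDerivAt.mul ((hdu x).hasDerivAt.pow 2))) (by fun_prop) ?_
    intro x
    show deriv u (x + 2 * P) * u (x + 2 * P) ^ 2 = deriv u x * u x ^ 2
    rw [hperd x, hper x]
  -- canonical polynomial integral
  have key : ∀ a b c e f : ℝ,
      (∫ θ in (-P)..P, (a + b * u θ + c * u θ ^ 2 + e * u θ ^ 3 + f * u θ ^ 4)) =
        a * (2 * P) + b * (∫ θ in (-P)..P, u θ) + c * (∫ θ in (-P)..P, u θ ^ 2) +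
          e * (∫ θ in (-P)..P, u θ ^ 3) + f * (∫ θ in (-P)..P, u θ ^ 4) := by
    intro a b c e f
    have ii : ∀ g : ℝ → ℝ, Continuous g → IntervalIntegrable g volume (-P) P :=
      fun g hg => hg.intervalIntegrable _ _
    rw [intervalIntegral.integral_add (ii _ (by fun_prop)) (ii _ (by fun_prop)),
        intervalIntegral.integral_add (ii _ (by fun_prop)) (ii _ (by fun_prop)),
        intervalIntegral.integral_add (ii _ (by fun_prop)) (ii _ (by fun_prop)),
        intervalIntegral.integral_add (ii _ (by fun_prop)) (ii _ (by fun_prop)),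
        intervalIntegral.integral_const, intervalIntegral.integral_const_mul,
        intervalIntegral.integral_const_mul, intervalIntegral.integral_const_mul,
        intervalIntegral.integral_const_mul]
    simp [smul_eq_mul]
    ring
  -- multiply the vanishing integrals by A and use the two relations
  have mulA : ∀ g : ℝ → ℝ, (∫ θ in (-P)..P, g θ) = 0 →
      (∫ θ in (-P)..P, A * g θ) = 0 := by
    intro g hg
    rw [intervalIntegral.integral_const_mul, hg, mul_zero]
  have E0 : (∫ θ in (-P)..P,
      (C + U * u θ + (-(1/2)) * u θ ^ 2 + 0 * u θ ^ 3 + 0 * u θ ^ 4)) = 0 := by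
    have heq : (∫ θ in (-P)..P,
        (C + U * u θ + (-(1/2)) * u θ ^ 2 + 0 * u θ ^ 3 + 0 * u θ ^ 4)) =
        ∫ θ in (-P)..P, A * deriv (deriv u) θ := by
      apply intervalIntegral.integral_congr
      intro θ _
      have h2 := hsecond θ
      dsimp only
      linear_combination -h2
    exact heq.trans (mulA _ H0)
  have E1 : (∫ θ in (-P)..P,
      (2 * D + 3 * C * u θ + 2 * U * u θ ^ 2 + (-(5/6)) * u θ ^ 3 + 0 * u θ ^ 4)) = 0 := by
    have heq : (∫ θ in (-P)..P,
        (2 * D + 3 * C * u θ + 2 * U * u θ ^ 2 + (-(5/6)) * u θ ^ 3 + 0 * u θ ^ 4)) =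
        ∫ θ in (-P)..P, A * (deriv (deriv u) θ * u θ + deriv u θ * deriv u θ) := by
      apply intervalIntegral.integral_congr
      intro θ _
      have h1 := hfirst θ
      have h2 := hsecond θ
      dsimp only
      linear_combination -(u θ) * h2 - h1
    exact heq.trans (mulA _ H1)
  have E2 : (∫ θ in (-P)..P,
      (0 + 4 * D * u θ + 5 * C * u θ ^ 2 + 3 * U * u θ ^ 3 + (-(7/6)) * u θ ^ 4)) = 0 := by
    have heq : (∫ θ in (-P)..P,
        (0 + 4 * D * u θ + 5 * C * u θ ^ 2 + 3 * U * u θ ^ 3 + (-(7/6)) * u θ ^ 4)) =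
        ∫ θ in (-P)..P, A * (deriv (deriv u) θ * u θ ^ 2 +
          deriv u θ * (2 * u θ ^ 1 * deriv u θ)) := by
      apply intervalIntegral.integral_congr
      intro θ _
      have h1 := hfirst θ
      have h2 := hsecond θ
      dsimp only
      linear_combination -(u θ)^2 * h2 - 2 * (u θ) * h1
    exact heq.trans (mulA _ H2)
  -- the target integral as a polynomial integral
  have hJ : (∫ θ in (-P)..P, A ^ 2 * (deriv (deriv u) θ) ^ 2) =
      (∫ θ in (-P)..P, (C ^ 2 + (2 * C * U) * u θ + (U ^ 2 - C) * u θ ^ 2 +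
        (-U) * u θ ^ 3 + (1/4) * u θ ^ 4)) := by
    apply intervalIntegral.integral_congr
    intro θ _
    have h2 := hsecond θ
    dsimp only
    linear_combination (A * deriv (deriv u) θ + C + U * u θ - (1/2) * (u θ)^2) * h2
  rw [key] at E0 E1 E2
  rw [hJ, key, hd]
  set I1 := ∫ θ in (-P)..P, u θ with hI1
  set I2 := ∫ θ in (-P)..P, u θ ^ 2 with hI2'
  set I3 := ∫ θ in (-P)..P, u θ ^ 3 with hI3'
  set I4 := ∫ θ in (-P)..P, u θ ^ 4 with hI4'
  have hI2 : I2 = 2 * (C * (2 * P) + U * I1) := by linarith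
  have hI3 : I3 = (6/5) * (2 * D * (2 * P) + 3 * C * I1 + 2 * U * I2) := by linarith
  have hI4 : I4 = (6/7) * (4 * D * I1 + 5 * C * I2 + 3 * U * I3) := by linarith
  rw [hI4, hI3, hI2]
  have h2P : (2 * P) ≠ 0 := by positivity
  field_simp
  ring
end

section
/- Let P > 0, let u : ℝ → ℝ be four times continuously differentiable and periodic with period 2P, let λ, ν, k, μ, γ, η, Ĉ, D̂, U be real constants with ν ≠ 0, λ ≠ 0 and k ≠ 0, set A = λk²/ν, suppose for all θ both A·u'(θ)² = 2D̂ + 2Ĉ·u(θ) + U·u(θ)² − (1/3)u(θ)³ and A·u''(θ) = Ĉ + U·u(θ) − (1/2)u(θ)², and let d = (1/(2P))∫_{−P}^{P} u(θ) dθ. Then (1/(2P))∫_{−P}^{P} u(θ)·(μk²·u''(θ) + γk⁴·u''''(θ) + ηk²·(u²)''(θ)) dθ = −(μk² + 2Uηk²)·(2ν/(5λk²))·(3D̂ + 2Ĉd + U(Ĉ + Ud)) + (γk⁴ − (2λη/ν)k⁴)·(ν²/(7λ²k⁴))·(6D̂d + 8Ĉ² + U(−6D̂ + 6Ĉd + 2UĈ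 + 2U²d)). -/
set_option maxHeartbeats 1000000

open intervalIntegral in
lemma poly_int {a b : ℝ} (u : ℝ → ℝ) (hc : Continuous u) (b0 b1 b2 b3 b4 : ℝ) :
    (∫ θ in a..b, (b0 + b1 * u θ + b2 * u θ ^ 2 + b3 * u θ ^ 3 + b4 * u θ ^ 4)) =
      b0 * (b - a) + b1 * (∫ θ in a..b, u θ) + b2 * (∫ θ in a..b, u θ ^ 2)
        + b3 * (∫ θ in a..b, u θ ^ 3) + b4 * (∫ θ in a..b, u θ ^ 4) := by
  have i0 : IntervalIntegrable (fun θ => b0 + b1 * u θ) MeasureTheory.volume a b :=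
    (continuous_const.add (continuous_const.mul hc)).intervalIntegrable _ _
  have i2 : IntervalIntegrable (fun θ => b2 * u θ ^ 2) MeasureTheory.volume a b :=
    (continuous_const.mul (hc.pow 2)).intervalIntegrable _ _
  have i3 : IntervalIntegrable (fun θ => b3 * u θ ^ 3) MeasureTheory.volume a b :=
    (continuous_const.mul (hc.pow 3)).intervalIntegrable _ _
  have i4 : IntervalIntegrable (fun θ => b4 * u θ ^ 4) MeasureTheory.volume a b :=
    (continuous_const.mul (hc.pow 4)).intervalIntegrable _ _
  rw [show (fun θ => b0 + b1 * u θ + b2 * u θ ^ 2 + b3 * u θ ^ 3 + b4 * u θ ^ 4)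
      = fun θ => (((b0 + b1 * u θ) + b2 * u θ ^ 2) + b3 * u θ ^ 3) + b4 * u θ ^ 4 from rfl]
  rw [integral_add ((i0.add i2).add i3) i4, integral_add (i0.add i2) i3, integral_add i0 i2,
    integral_add ((continuous_const : Continuous fun _ : ℝ => b0).intervalIntegrable _ _)
      (show IntervalIntegrable (fun θ => b1 * u θ) MeasureTheory.volume a b from
        (continuous_const.mul hc).intervalIntegrable _ _),
    integral_const, integral_const_mul, integral_const_mul, integral_const_mul,
    integral_const_mul, smul_eq_mul]
  ring

/-- The period-average of `u · (μk² u'' + γk⁴ u'''' + ηk² (u²)'')` for a `C⁴`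
periodic cnoidal wave satisfying the first- and second-integral relations,
expressed via `Ĉ, D̂, U` and the mean value `d`. -/
theorem stmt_7 (P : ℝ) (hP : 0 < P) (u : ℝ → ℝ)
    (lam nu k mu gam eta C D U d : ℝ)
    (hnu : nu ≠ 0) (hlam : lam ≠ 0) (hk : k ≠ 0)
    (hu : ContDiff ℝ 4 u) (hper : Function.Periodic u (2 * P))
    (A : ℝ) (hA : A = lam * k ^ 2 / nu)
    (hfirst : ∀ θ : ℝ, A * (deriv u θ) ^ 2 =
      2 * D + 2 * C * u θ + U * (u θ) ^ 2 - (1 / 3) * (u θ) ^ 3)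
    (hsecond : ∀ θ : ℝ, A * deriv (deriv u) θ = C + U * u θ - (1 / 2) * (u θ) ^ 2)
    (hd : d = (1 / (2 * P)) * ∫ θ in (-P)..P, u θ) :
    (1 / (2 * P)) * ∫ θ in (-P)..P, u θ *
        (mu * k ^ 2 * deriv (deriv u) θ +
          gam * k ^ 4 * deriv (deriv (deriv (deriv u))) θ +
          eta * k ^ 2 * deriv (deriv (fun s => (u s) ^ 2)) θ) =
      -(mu * k ^ 2 + 2 * U * eta * k ^ 2) * (2 * nu / (5 * lam * k ^ 2)) *
          (3 * D + 2 * C * d + U * (C + U * d)) +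
        (gam * k ^ 4 - (2 * lam * eta / nu) * k ^ 4) *
          (nu ^ 2 / (7 * lam ^ 2 * k ^ 4)) *
          (6 * D * d + 8 * C ^ 2 +
            U * (-6 * D + 6 * C * d + 2 * U * C + 2 * U ^ 2 * d)) := by
  have hA0 : A ≠ 0 := by
    rw [hA]
    exact div_ne_zero (mul_ne_zero hlam (pow_ne_zero 2 hk)) hnu
  -- differentiability / continuity facts
  have hu2' : ContDiff ℝ 2 u := hu.of_le (by norm_num)
  have hu1 : Differentiable ℝ u := hu2'.differentiable (by norm_num)
  have cu : Continuous u := hu1.continuous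
  have hu2 : Differentiable ℝ (deriv u) := by
    rw [show (2 : WithTop ℕ∞) = 1 + 1 by norm_num] at hu2'
    exact ((contDiff_succ_iff_deriv.mp hu2').2.2).differentiable one_ne_zero
  have cu' : Continuous (deriv u) := hu2.continuous
  -- pointwise rewrites from the ODE relations
  have E2nd : deriv (deriv u) = fun θ => (C + U * u θ - (1 / 2) * (u θ) ^ 2) / A := by
    funext θ
    rw [eq_div_iff hA0]
    linear_combination hsecond θ
  have cu'' : Continuous (deriv (deriv u)) := by
    rw [E2nd]
    exact ((continuous_const.add (continuous_const.mul cu)).sub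
      (continuous_const.mul (cu.pow 2))).div_const A
  have E3 : deriv (deriv (deriv u)) = fun θ => ((U - u θ) * deriv u θ) / A := by
    rw [E2nd]
    funext θ
    have h1 : HasDerivAt u (deriv u θ) θ := (hu1 θ).hasDerivAt
    have h : HasDerivAt (fun θ => (C + U * u θ - (1 / 2) * (u θ) ^ 2) / A)
        (((U - u θ) * deriv u θ) / A) θ := by
      have := (((h1.const_mul U).const_add C).sub
        ((h1.pow 2).const_mul (1 / 2))).div_const A
      refine this.congr_deriv ?_
      push_cast
      ring
    exact h.deriv
  have E4 : deriv (deriv (deriv (deriv u))) = fun θ =>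
      (-(deriv u θ) ^ 2 + (U - u θ) * ((C + U * u θ - (1 / 2) * (u θ) ^ 2) / A)) / A := by
    rw [E3]
    funext θ
    have h1 : HasDerivAt u (deriv u θ) θ := (hu1 θ).hasDerivAt
    have h2 : HasDerivAt (deriv u) (deriv (deriv u) θ) θ := (hu2 θ).hasDerivAt
    have h : HasDerivAt (fun θ => ((U - u θ) * deriv u θ) / A)
        ((-(deriv u θ) ^ 2 + (U - u θ) * deriv (deriv u) θ) / A) θ := by
      have := ((h1.const_sub U).mul h2).div_const A
      refine this.congr_deriv ?_
      ring
    rw [h.deriv]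
    simp only [E2nd]
  have Ew : deriv (fun s => (u s) ^ 2) = fun θ => 2 * u θ * deriv u θ := by
    funext θ
    rw [HasDerivAt.deriv (f := fun s => u s ^ 2) ((hu1 θ).hasDerivAt.pow 2)]
    push_cast
    ring
  have Ew2 : deriv (deriv (fun s => (u s) ^ 2)) = fun θ =>
      2 * (deriv u θ) ^ 2 + 2 * u θ * ((C + U * u θ - (1 / 2) * (u θ) ^ 2) / A) := by
    rw [Ew]
    funext θ
    have h1 : HasDerivAt u (deriv u θ) θ := (hu1 θ).hasDerivAt
    have h2 : HasDerivAt (deriv u) (deriv (deriv u) θ) θ := (hu2 θ).hasDerivAt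
    have h : HasDerivAt (fun θ => 2 * u θ * deriv u θ)
        (2 * (deriv u θ) ^ 2 + 2 * u θ * deriv (deriv u) θ) θ := by
      have := ((h1.const_mul 2).mul h2)
      refine this.congr_deriv ?_
      ring
    rw [h.deriv]
    simp only [E2nd]
  -- periodicity of u and deriv u at the endpoints
  have hperP : u P = u (-P) := by
    have := hper (-P)
    rw [show -P + 2 * P = P by ring] at this
    exact this
  have hper' : deriv u P = deriv u (-P) := by
    have hfun : u = fun y => u (y + 2 * P) := funext fun y => (hper y).symm
    have : deriv u (-P) = deriv (fun y => u (y + 2 * P)) (-P) := by rw [← hfun]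
    rw [this, deriv_comp_add_const, show -P + 2 * P = P by ring]
  -- integral by-parts facts
  have hE0 : (∫ θ in (-P)..P, deriv (deriv u) θ) = 0 := by
    rw [intervalIntegral.integral_eq_sub_of_hasDerivAt
      (f := deriv u) (fun x _ => (hu2 x).hasDerivAt) (cu''.intervalIntegrable _ _),
      hper', sub_self]
  have hBP1 : (∫ θ in (-P)..P, (deriv u θ ^ 2 + u θ * deriv (deriv u) θ)) = 0 := by
    rw [intervalIntegral.integral_eq_sub_of_hasDerivAt
      (f := fun θ => u θ * deriv u θ)
      (f' := fun θ => deriv u θ ^ 2 + u θ * deriv (deriv u) θ)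
      (fun x _ => by
        have := ((hu1 x).hasDerivAt.mul (hu2 x).hasDerivAt)
        refine this.congr_deriv ?_
        ring)
      (((cu'.pow 2).add (cu.mul cu'')).intervalIntegrable _ _),
      hperP, hper', sub_self]
  have hBP2 : (∫ θ in (-P)..P, (2 * u θ * deriv u θ ^ 2 + u θ ^ 2 * deriv (deriv u) θ)) = 0 := by
    rw [intervalIntegral.integral_eq_sub_of_hasDerivAt
      (f := fun θ => u θ ^ 2 * deriv u θ)
      (f' := fun θ => 2 * u θ * deriv u θ ^ 2 + u θ ^ 2 * deriv (deriv u) θ)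
      (fun x _ => by
        have := (((hu1 x).hasDerivAt.pow 2).mul (hu2 x).hasDerivAt)
        refine this.congr_deriv ?_
        push_cast
        rw [Pi.pow_apply]
        ring)
      ((((continuous_const.mul cu).mul (cu'.pow 2)).add
        ((cu.pow 2).mul cu'')).intervalIntegrable _ _),
      hperP, hper', sub_self]
  -- turn them into polynomial moment relations
  have eq1 : (∫ θ in (-P)..P,
      (C + U * u θ + (-(1/2)) * u θ ^ 2 + 0 * u θ ^ 3 + 0 * u θ ^ 4)) = 0 := by
    have h : (∫ θ in (-P)..P,
        (C + U * u θ + (-(1/2)) * u θ ^ 2 + 0 * u θ ^ 3 + 0 * u θ ^ 4))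
        = ∫ θ in (-P)..P, A * deriv (deriv u) θ := by
      apply intervalIntegral.integral_congr
      intro θ _
      linear_combination (-1 : ℝ) * hsecond θ
    rw [h, intervalIntegral.integral_const_mul, hE0, mul_zero]
  have eq2 : (∫ θ in (-P)..P,
      (2 * D + (3 * C) * u θ + (2 * U) * u θ ^ 2 + (-(5/6)) * u θ ^ 3 + 0 * u θ ^ 4)) = 0 := by
    have h : (∫ θ in (-P)..P,
        (2 * D + (3 * C) * u θ + (2 * U) * u θ ^ 2 + (-(5/6)) * u θ ^ 3 + 0 * u θ ^ 4))
        = ∫ θ in (-P)..P, A * (deriv u θ ^ 2 + u θ * deriv (deriv u) θ) := by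
      apply intervalIntegral.integral_congr
      intro θ _
      linear_combination (-1 : ℝ) * hfirst θ - u θ * hsecond θ
    rw [h, intervalIntegral.integral_const_mul, hBP1, mul_zero]
  have eq3 : (∫ θ in (-P)..P,
      (0 + (4 * D) * u θ + (5 * C) * u θ ^ 2 + (3 * U) * u θ ^ 3 + (-(7/6)) * u θ ^ 4)) = 0 := by
    have h : (∫ θ in (-P)..P,
        (0 + (4 * D) * u θ + (5 * C) * u θ ^ 2 + (3 * U) * u θ ^ 3 + (-(7/6)) * u θ ^ 4))
        = ∫ θ in (-P)..P, A * (2 * u θ * deriv u θ ^ 2 + u θ ^ 2 * deriv (deriv u) θ) := by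
      apply intervalIntegral.integral_congr
      intro θ _
      linear_combination (-2 * u θ) * hfirst θ - u θ ^ 2 * hsecond θ
    rw [h, intervalIntegral.integral_const_mul, hBP2, mul_zero]
  -- the main integrand as a polynomial in u
  have eq4 : (∫ θ in (-P)..P,
      (0 + (mu * k ^ 2 * A * C + gam * k ^ 4 * (C * U - 2 * D) + 4 * eta * k ^ 2 * A * D) * u θ
        + (mu * k ^ 2 * A * U + gam * k ^ 4 * (U ^ 2 - 3 * C) + 6 * eta * k ^ 2 * A * C) * u θ ^ 2
        + (-(1/2) * mu * k ^ 2 * A - (5/2) * gam * k ^ 4 * U + 4 * eta * k ^ 2 * A * U) * u θ ^ 3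
        + ((5/6) * gam * k ^ 4 - (5/3) * eta * k ^ 2 * A) * u θ ^ 4))
      = A ^ 2 * ∫ θ in (-P)..P, u θ *
        (mu * k ^ 2 * deriv (deriv u) θ +
          gam * k ^ 4 * deriv (deriv (deriv (deriv u))) θ +
          eta * k ^ 2 * deriv (deriv (fun s => (u s) ^ 2)) θ) := by
    rw [← intervalIntegral.integral_const_mul]
    apply intervalIntegral.integral_congr
    intro θ _
    rw [E4, Ew2, E2nd]
    beta_reduce
    have hY : (deriv u θ) ^ 2
        = (2 * D + 2 * C * u θ + U * (u θ) ^ 2 - (1 / 3) * (u θ) ^ 3) / A := by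
      rw [eq_div_iff hA0]
      linear_combination hfirst θ
    rw [hY]
    field_simp
    ring
  -- convert to moment equalities
  rw [poly_int u cu] at eq1 eq2 eq3 eq4
  have hI1 : (∫ θ in (-P)..P, u θ) = d * (2 * P) := by
    rw [hd]
    field_simp
  have hI2 : (∫ θ in (-P)..P, u θ ^ 2)
      = 2 * C * (2 * P) + 2 * U * (∫ θ in (-P)..P, u θ) := by
    linear_combination (-2 : ℝ) * eq1
  have hI3 : (∫ θ in (-P)..P, u θ ^ 3)
      = (6/5) * (2 * D * (2 * P) + 3 * C * (∫ θ in (-P)..P, u θ)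
          + 2 * U * (∫ θ in (-P)..P, u θ ^ 2)) := by
    linear_combination (-6/5 : ℝ) * eq2
  have hI4 : (∫ θ in (-P)..P, u θ ^ 4)
      = (6/7) * (4 * D * (∫ θ in (-P)..P, u θ) + 5 * C * (∫ θ in (-P)..P, u θ ^ 2)
          + 3 * U * (∫ θ in (-P)..P, u θ ^ 3)) := by
    linear_combination (-6/7 : ℝ) * eq3
  have hIv : (∫ θ in (-P)..P, u θ *
        (mu * k ^ 2 * deriv (deriv u) θ +
          gam * k ^ 4 * deriv (deriv (deriv (deriv u))) θ +
          eta * k ^ 2 * deriv (deriv (fun s => (u s) ^ 2)) θ))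
      = (0 * (P - -P)
        + (mu * k ^ 2 * A * C + gam * k ^ 4 * (C * U - 2 * D) + 4 * eta * k ^ 2 * A * D) * (∫ θ in (-P)..P, u θ)
        + (mu * k ^ 2 * A * U + gam * k ^ 4 * (U ^ 2 - 3 * C) + 6 * eta * k ^ 2 * A * C) * (∫ θ in (-P)..P, u θ ^ 2)
        + (-(1/2) * mu * k ^ 2 * A - (5/2) * gam * k ^ 4 * U + 4 * eta * k ^ 2 * A * U) * (∫ θ in (-P)..P, u θ ^ 3)
        + ((5/6) * gam * k ^ 4 - (5/3) * eta * k ^ 2 * A) * (∫ θ in (-P)..P, u θ ^ 4)) / A ^ 2 := by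
    rw [eq_div_iff (pow_ne_zero 2 hA0)]
    linear_combination (-1 : ℝ) * eq4
  rw [hIv, hI4, hI3, hI2, hI1, hA]
  field_simp
  ring
end

section
/- Let r₁, r₂, r₃ : ℝ → ℝ be differentiable functions that are pairwise distinct at every point, let M̂ : ℝ → ℝ, and suppose that for each i and every Θ ∈ ℝ, rᵢ'(Θ) = M̂(Θ)/∏_{j≠i}(rᵢ(Θ) − r_j(Θ)). Then the symmetric functions s₁ = r₁ + r₂ + r₃ and s₂ = r₁r₂ + r₁r₃ + r₂r₃ have zero derivative at every Θ ∈ ℝ. -/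
/-- If the Riemann invariants `r₁, r₂, r₃`, pairwise distinct at every point,
satisfy `rᵢ' = M̂/∏_{j≠i}(rᵢ − r_j)`, then the elementary symmetric functions
`s₁ = r₁ + r₂ + r₃` and `s₂ = r₁r₂ + r₁r₃ + r₂r₃` have zero derivative. -/
theorem stmt_8 (r1 r2 r3 M : ℝ → ℝ)
    (hd1 : Differentiable ℝ r1) (hd2 : Differentiable ℝ r2)
    (hd3 : Differentiable ℝ r3)
    (hne12 : ∀ Θ : ℝ, r1 Θ ≠ r2 Θ) (hne13 : ∀ Θ : ℝ, r1 Θ ≠ r3 Θ)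
    (hne23 : ∀ Θ : ℝ, r2 Θ ≠ r3 Θ)
    (hr1 : ∀ Θ : ℝ, deriv r1 Θ = M Θ / ((r1 Θ - r2 Θ) * (r1 Θ - r3 Θ)))
    (hr2 : ∀ Θ : ℝ, deriv r2 Θ = M Θ / ((r2 Θ - r1 Θ) * (r2 Θ - r3 Θ)))
    (hr3 : ∀ Θ : ℝ, deriv r3 Θ = M Θ / ((r3 Θ - r1 Θ) * (r3 Θ - r2 Θ))) :
    ∀ Θ : ℝ,
      deriv (fun s => r1 s + r2 s + r3 s) Θ = 0 ∧
      deriv (fun s => r1 s * r2 s + r1 s * r3 s + r2 s * r3 s) Θ = 0 := by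
  intro Θ
  have h12 : r1 Θ - r2 Θ ≠ 0 := sub_ne_zero.2 (hne12 Θ)
  have h13 : r1 Θ - r3 Θ ≠ 0 := sub_ne_zero.2 (hne13 Θ)
  have h23 : r2 Θ - r3 Θ ≠ 0 := sub_ne_zero.2 (hne23 Θ)
  have h21 : r2 Θ - r1 Θ ≠ 0 := sub_ne_zero.2 (Ne.symm (hne12 Θ))
  have h31 : r3 Θ - r1 Θ ≠ 0 := sub_ne_zero.2 (Ne.symm (hne13 Θ))
  have h32 : r3 Θ - r2 Θ ≠ 0 := sub_ne_zero.2 (Ne.symm (hne23 Θ))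
  have e1 : deriv (fun s => r1 s + r2 s + r3 s) Θ
      = deriv r1 Θ + deriv r2 Θ + deriv r3 Θ := by
    rw [deriv_fun_add (f := fun s => r1 s + r2 s) ((hd1.add hd2).differentiableAt) (hd3.differentiableAt),
        deriv_fun_add (hd1.differentiableAt) (hd2.differentiableAt)]
  have e2 : deriv (fun s => r1 s * r2 s + r1 s * r3 s + r2 s * r3 s) Θ
      = (deriv r1 Θ * r2 Θ + r1 Θ * deriv r2 Θ)
        + (deriv r1 Θ * r3 Θ + r1 Θ * deriv r3 Θ)
        + (deriv r2 Θ * r3 Θ + r2 Θ * deriv r3 Θ) := by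
    rw [deriv_fun_add (f := fun s => r1 s * r2 s + r1 s * r3 s) (g := fun s => r2 s * r3 s) (((hd1.mul hd2).add (hd1.mul hd3)).differentiableAt)
        ((hd2.mul hd3).differentiableAt),
      deriv_fun_add (f := fun s => r1 s * r2 s) (g := fun s => r1 s * r3 s) ((hd1.mul hd2).differentiableAt) ((hd1.mul hd3).differentiableAt),
      deriv_fun_mul hd1.differentiableAt hd2.differentiableAt,
      deriv_fun_mul hd1.differentiableAt hd3.differentiableAt,
      deriv_fun_mul hd2.differentiableAt hd3.differentiableAt]
  constructor
  · rw [e1, hr1, hr2, hr3]; field_simp; ring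
  · rw [e2, hr1, hr2, hr3]; field_simp; ring
end

section
/- Let r₁, r₂, r₃ : ℝ → ℝ be differentiable functions that are pairwise distinct at every point, let M̂ : ℝ → ℝ, and suppose that for each i and every Θ ∈ ℝ, rᵢ'(Θ) = M̂(Θ)/∏_{j≠i}(rᵢ(Θ) − r_j(Θ)). Then the product s₃ = r₁r₂r₃ satisfies s₃'(Θ) = M̂(Θ) for every Θ ∈ ℝ. -/
/-- If the Riemann invariants `r₁, r₂, r₃`, pairwise distinct at every point,
satisfy `rᵢ' = M̂/∏_{j≠i}(rᵢ − r_j)`, then `s₃ = r₁r₂r₃` satisfies `s₃' = M̂`. -/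
theorem stmt_9 (r1 r2 r3 M : ℝ → ℝ)
    (hd1 : Differentiable ℝ r1) (hd2 : Differentiable ℝ r2)
    (hd3 : Differentiable ℝ r3)
    (hne12 : ∀ Θ : ℝ, r1 Θ ≠ r2 Θ) (hne13 : ∀ Θ : ℝ, r1 Θ ≠ r3 Θ)
    (hne23 : ∀ Θ : ℝ, r2 Θ ≠ r3 Θ)
    (hr1 : ∀ Θ : ℝ, deriv r1 Θ = M Θ / ((r1 Θ - r2 Θ) * (r1 Θ - r3 Θ)))
    (hr2 : ∀ Θ : ℝ, deriv r2 Θ = M Θ / ((r2 Θ - r1 Θ) * (r2 Θ - r3 Θ)))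
    (hr3 : ∀ Θ : ℝ, deriv r3 Θ = M Θ / ((r3 Θ - r1 Θ) * (r3 Θ - r2 Θ))) :
    ∀ Θ : ℝ, deriv (fun s => r1 s * r2 s * r3 s) Θ = M Θ := by
  intro t
  have h12 : r1 t - r2 t ≠ 0 := sub_ne_zero.mpr (hne12 t)
  have h13 : r1 t - r3 t ≠ 0 := sub_ne_zero.mpr (hne13 t)
  have h23 : r2 t - r3 t ≠ 0 := sub_ne_zero.mpr (hne23 t)
  have h21 : r2 t - r1 t ≠ 0 := sub_ne_zero.mpr (hne12 t).symm
  have h31 : r3 t - r1 t ≠ 0 := sub_ne_zero.mpr (hne13 t).symm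
  have h32 : r3 t - r2 t ≠ 0 := sub_ne_zero.mpr (hne23 t).symm
  have hD : deriv (fun s => r1 s * r2 s * r3 s) t =
      (deriv r1 t * r2 t + r1 t * deriv r2 t) * r3 t +
        r1 t * r2 t * deriv r3 t := by
    rw [deriv_fun_mul (c := fun s => r1 s * r2 s) ((hd1 t).mul (hd2 t)) (hd3 t), deriv_fun_mul (hd1 t) (hd2 t)]
  rw [hD, hr1 t, hr2 t, hr3 t]
  field_simp
  ring
end

section
/- Let r₁ < r₂ < r₃ be real numbers, set s₁ = r₁ + r₂ + r₃, s₂ = r₁r₂ + r₁r₃ + r₂r₃, s₃ = r₁r₂r₃, and let m = √((r₂ − r₁)/(r₃ − r₁)) ∈ (0,1). Then s₃ = −(1/27)·((s₁² − 3s₂)/(m⁴ − m² + 1))^{3/2}·(−2m⁶ + 3m⁴ + 3m² − 2) + s₁s₂/3 − 2s₁³/27. -/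
/-- For Riemann invariants `r₁ < r₂ < r₃` with modulus
`m = √((r₂−r₁)/(r₃−r₁)) ∈ (0,1)`, the product `s₃ = r₁r₂r₃` satisfies
`s₃ = −(1/27)((s₁² − 3s₂)/(m⁴ − m² + 1))^{3/2}(−2m⁶ + 3m⁴ + 3m² − 2)
      + s₁s₂/3 − 2s₁³/27`. -/
theorem stmt_15 (r1 r2 r3 s1 s2 s3 m : ℝ)
    (h12 : r1 < r2) (h23 : r2 < r3)
    (hs1 : s1 = r1 + r2 + r3) (hs2 : s2 = r1 * r2 + r1 * r3 + r2 * r3)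
    (hs3 : s3 = r1 * r2 * r3)
    (hm : m = Real.sqrt ((r2 - r1) / (r3 - r1)))
    (hm01 : m ∈ Set.Ioo (0 : ℝ) 1) :
    s3 = -(1 / 27) * ((s1 ^ 2 - 3 * s2) / (m ^ 4 - m ^ 2 + 1)) ^ ((3 : ℝ) / 2) *
        (-2 * m ^ 6 + 3 * m ^ 4 + 3 * m ^ 2 - 2) +
      s1 * s2 / 3 - 2 * s1 ^ 3 / 27 := by
  have hd : (0:ℝ) < r3 - r1 := by linarith
  have hm2 : m ^ 2 = (r2 - r1) / (r3 - r1) := by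
    rw [hm, sq, Real.mul_self_sqrt (div_nonneg (by linarith) (by linarith))]
  have hden : m ^ 4 - m ^ 2 + 1 > 0 := by nlinarith [sq_nonneg (m^2 - 1), sq_nonneg m]
  have hnum : s1 ^ 2 - 3 * s2 = (r3 - r1) ^ 2 * (m ^ 4 - m ^ 2 + 1) := by
    have h4 : m ^ 4 = ((r2 - r1) / (r3 - r1)) ^ 2 := by
      rw [show m ^ 4 = (m ^ 2) ^ 2 by ring, hm2]
    rw [hs1, hs2, h4, hm2]
    field_simp
    ring
  have hdiv : (s1 ^ 2 - 3 * s2) / (m ^ 4 - m ^ 2 + 1) = (r3 - r1) ^ 2 := by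
    rw [hnum, mul_div_assoc, div_self (ne_of_gt hden), mul_one]
  have hpow : ((r3 - r1) ^ 2 : ℝ) ^ ((3:ℝ)/2) = (r3 - r1) ^ 3 := by
    rw [← Real.rpow_natCast (r3 - r1) 2, ← Real.rpow_mul hd.le]
    norm_num
  rw [hdiv, hpow]
  have h4 : m ^ 4 = ((r2 - r1) / (r3 - r1)) ^ 2 := by
    rw [show m ^ 4 = (m ^ 2) ^ 2 by ring, hm2]
  have h6 : m ^ 6 = ((r2 - r1) / (r3 - r1)) ^ 3 := by
    rw [show m ^ 6 = (m ^ 2) ^ 3 by ring, hm2]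
  rw [hs1, hs2, hs3, h4, h6, hm2]
  field_simp
  ring
end

section
/- Let m ∈ (0,1), let K(m) = ∫₀^{π/2} (1 − m²sin²θ)^{−1/2} dθ and E(m) = ∫₀^{π/2} (1 − m²sin²θ)^{1/2} dθ, and define H₁(m) = (18m⁴/(1 − m² + m⁴))^{1/2}, H₂(m) = (H₁(m)³/(162m⁶))·(−2 + 3m² + 3m⁴ − 2m⁶), H₃(m) = (H₁(m)/(3m²))·(3E(m)/K(m) + m² − 2), and ρ̄(m) = (H₁(m)/(m²K(m)²))·(3H₂(m) + 2H₃(m))/(3H₂(m)H₃(m) + 4). Let λ, ν, μ, γ, η, k, P, s₁ be real numbers with λ ≠ 0, η ≠ 0, P ≠ 0, k ≠ 0, λν > 0, 3H₂(m) + 2H₃(m) ≠ 0 and 3H₂(m)H₃(m) + 4 ≠ 0, and set κ = (kK(m)/P)⁴·(12λ/ν)²·(m⁴ − m² + 1)/18. If −(μ + (s₁/3)η)·(2νκ^{3/2}/(5λ))·(3H₂(m) + 2H₃(m)) + (γ − 2λη/ν)·(ν²κ²/(7λ²))·(6H₂(m)H₃(m) + 8) = 0, then s₁ = (180/(7ρ̄(m)))·(k/P)²·(γ/η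 − 2λ/ν) − 3μ/η. -/
set_option maxHeartbeats 1000000


/-- The constant-modulus condition
`−(μ + (s₁/3)η)(2νκ^{3/2}/(5λ))(3H₂ + 2H₃)
   + (γ − 2λη/ν)(ν²κ²/(7λ²))(6H₂H₃ + 8) = 0`,
with `κ = (kK(m)/P)⁴(12λ/ν)²(m⁴ − m² + 1)/18`, determines the wave-speed
parameter `s₁ = (180/(7ρ̄(m)))(k/P)²(γ/η − 2λ/ν) − 3μ/η`. -/
theorem stmt_18 (m : ℝ) (hm : m ∈ Set.Ioo (0 : ℝ) 1)
    (K E H1 H2 H3 rhobar : ℝ)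
    (hK : K = ∫ θ in (0 : ℝ)..(Real.pi / 2),
      (1 - m ^ 2 * Real.sin θ ^ 2) ^ (-(1 : ℝ) / 2))
    (hE : E = ∫ θ in (0 : ℝ)..(Real.pi / 2),
      (1 - m ^ 2 * Real.sin θ ^ 2) ^ ((1 : ℝ) / 2))
    (hH1 : H1 = (18 * m ^ 4 / (1 - m ^ 2 + m ^ 4)) ^ ((1 : ℝ) / 2))
    (hH2 : H2 = (H1 ^ 3 / (162 * m ^ 6)) *
      (-2 + 3 * m ^ 2 + 3 * m ^ 4 - 2 * m ^ 6))
    (hH3 : H3 = (H1 / (3 * m ^ 2)) * (3 * E / K + m ^ 2 - 2))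
    (hrho : rhobar = (H1 / (m ^ 2 * K ^ 2)) *
      ((3 * H2 + 2 * H3) / (3 * H2 * H3 + 4)))
    (lam nu mu gam eta k P s1 kappa : ℝ)
    (hlam : lam ≠ 0) (heta : eta ≠ 0) (hP : P ≠ 0) (hk : k ≠ 0)
    (hlamnu : 0 < lam * nu)
    (hnum : 3 * H2 + 2 * H3 ≠ 0) (hden : 3 * H2 * H3 + 4 ≠ 0)
    (hkappa : kappa = (k * K / P) ^ 4 * (12 * lam / nu) ^ 2 *
      (m ^ 4 - m ^ 2 + 1) / 18)
    (hcond : -(mu + (s1 / 3) * eta) * (2 * nu * kappa ^ ((3 : ℝ) / 2) / (5 * lam)) *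
        (3 * H2 + 2 * H3) +
      (gam - 2 * lam * eta / nu) * (nu ^ 2 * kappa ^ 2 / (7 * lam ^ 2)) *
        (6 * H2 * H3 + 8) = 0) :
    s1 = (180 / (7 * rhobar)) * (k / P) ^ 2 * (gam / eta - 2 * lam / nu) -
      3 * mu / eta := by
  obtain ⟨hm0, hm1⟩ := hm
  have hnu : nu ≠ 0 := by rintro rfl; simp at hlamnu
  have hm2 : (0:ℝ) < m ^ 2 := by positivity
  have hm21 : m ^ 2 < 1 := by nlinarith
  have hD : (0:ℝ) < 1 - m ^ 2 + m ^ 4 := by nlinarith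
  -- K > 0
  have hKpos : 0 < K := by
    rw [hK]
    have hcont : Continuous fun θ : ℝ => (1 - m ^ 2 * Real.sin θ ^ 2) ^ (-(1:ℝ) / 2) := by
      apply Continuous.rpow_const (continuous_const.sub (continuous_const.mul (Real.continuous_sin.pow 2)))
      intro x
      left
      show (1:ℝ) - m ^ 2 * Real.sin x ^ 2 ≠ 0
      have := Real.sin_sq_le_one x
      nlinarith
    apply intervalIntegral.intervalIntegral_pos_of_pos_on
      (hcont.intervalIntegrable _ _)
    · intro x _
      apply Real.rpow_pos_of_pos
      have := Real.sin_sq_le_one x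
      nlinarith
    · positivity
  have hKne : K ≠ 0 := ne_of_gt hKpos
  -- H1 > 0 and H1^2
  have hH1pos : 0 < H1 := by
    rw [hH1]; apply Real.rpow_pos_of_pos; positivity
  have hH1ne : H1 ≠ 0 := ne_of_gt hH1pos
  have hH1sq : H1 ^ 2 = 18 * m ^ 4 / (1 - m ^ 2 + m ^ 4) := by
    rw [hH1, ← Real.sqrt_eq_rpow, Real.sq_sqrt (by positivity)]
  -- lam/nu > 0
  have hln : 0 < lam / nu := by
    have h : lam / nu = (lam * nu) / nu ^ 2 := by field_simp
    rw [h]; positivity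
  -- t
  obtain ⟨t, ht⟩ : ∃ t : ℝ, t = (k * K / P) ^ 2 * (12 * lam / nu) * (m ^ 2 / H1) := ⟨_, rfl⟩
  have htpos : 0 < t := by
    rw [ht]
    apply mul_pos (mul_pos ?_ ?_) (by positivity)
    · exact sq_pos_of_ne_zero (div_ne_zero (mul_ne_zero hk hKne) hP)
    · have : 12 * lam / nu = 12 * (lam / nu) := by ring
      rw [this]; positivity
  have ht2 : t ^ 2 = kappa := by
    rw [hkappa]
    have expand : t ^ 2 = (k * K / P) ^ 4 * (12 * lam / nu) ^ 2 * (m ^ 4 / H1 ^ 2) := by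
      rw [ht]; ring
    rw [expand, hH1sq]
    field_simp
    ring
  have h32 : kappa ^ ((3:ℝ) / 2) = t ^ 3 := by
    rw [← ht2, ← Real.rpow_natCast t 2, ← Real.rpow_mul htpos.le]
    norm_num
  have h4 : kappa ^ 2 = t ^ 4 := by rw [← ht2]; ring
  rw [h32, h4] at hcond
  have hs1 : s1 = (gam - 2 * lam * eta / nu) * (15 * nu * t * (3 * H2 * H3 + 4)) /
      (7 * lam * eta * (3 * H2 + 2 * H3)) - 3 * mu / eta := by
    have h := hcond
    have htne : t ≠ 0 := ne_of_gt htpos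
    field_simp at h ⊢
    have h' : (-(s1 * eta) + -(mu * 3)) * (2 * nu) * (3 * H2 + 2 * H3) * (nu * (7 * lam ^ 2)) +
        (gam * nu - 2 * lam * eta) * (nu ^ 2 * t) * (6 * H2 * H3 + 8) * (3 * (5 * lam)) = 0 := by
      apply mul_left_cancel₀ (pow_ne_zero 3 htne)
      linear_combination (nu * lam) * h
    apply mul_left_cancel₀ (show (2 * nu * lam : ℝ) ≠ 0 by
      exact mul_ne_zero (mul_ne_zero two_ne_zero hnu) hlam)
    have h'' : nu * (nu * lam * (-14 * lam * (3 * mu + s1 * eta) * (3 * H2 + 2 * H3) +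
        15 * t * (nu * gam - 2 * eta * lam) * (6 * H2 * H3 + 8))) = nu * 0 := by
      linear_combination h'
    linear_combination (-1) * mul_left_cancel₀ hnu h''
  rw [hs1, ht, hrho]
  field_simp
  ring
end

section
/- Let v > 0 and set τ_s = 1/(2v). Let m ∈ (0,1), let K(m) = ∫₀^{π/2} (1 − m²sin²θ)^{−1/2} dθ and E(m) = ∫₀^{π/2} (1 − m²sin²θ)^{1/2} dθ, define b(m) = (1 − m²)/m² − E(m)/(m²K(m)), H₁(m) = (18m⁴/(1 − m² + m⁴))^{1/2}, H₂(m) = (H₁(m)³/(162m⁶))·(−2 + 3m² + 3m⁴ − 2m⁶), H₃(m) = (H₁(m)/(3m²))·(3E(m)/K(m) + m² − 2), and ρ̄(m) = (H₁(m)/(m²K(m)²))·(3H₂(m) + 2H₃(m))/(3H₂(m)H₃(m) + 4), and assume ρ̄(m) ≠ 0. Let N, n be positive reals, let τ < τ_s, set P = (N/(2n))·√(12(τ_s − τ)), set λ = ν = 1, μ = −√(3v/2), γ = (3/2)√(3/(2v)), η = (1/2)√(3/(2v)), κ = (K(m)/P)⁴·144·(m⁴ − m² + 1)/18 and a = √κ·H₁(m).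 If a real number s₁ satisfies both s₁ = (180/(7ρ̄(m)))·(1/P²)·(γ/η − 2λ/ν) − 3μ/η and s₁ = −6·(a·b(m) + (a/(3m²))·(3E(m)/K(m) + m² − 2)), then τ = (2n²/(3N²v))·(15/(7ρ̄(m)) + 6m²K(m)²·(b(m) + (1/(3m²))·(3E(m)/K(m) + m² − 2))) + 1/(2v). -/
set_option maxHeartbeats 2000000 in
/-- In the traffic OV model (parameters `λ = ν = 1`, `μ = −√(3v/2)`,
`γ = (3/2)√(3/(2v))`, `η = (1/2)√(3/(2v))`, `v = V'(h) > 0`), if `s₁` satisfies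
both the constant-modulus condition (with `k = 1`) and the boundary condition
`s₁ = −6(ab + (a/(3m²))(3E/K + m² − 2))`, then the driver delay time is
`τ = (2n²/(3N²v))(15/(7ρ̄) + 6m²K²(b + (1/(3m²))(3E/K + m² − 2))) + 1/(2v)`. -/
theorem stmt_19 (v : ℝ) (hv : 0 < v) (tau_s : ℝ) (htau_s : tau_s = 1 / (2 * v))
    (m : ℝ) (hm : m ∈ Set.Ioo (0 : ℝ) 1)
    (K E b H1 H2 H3 rhobar : ℝ)
    (hK : K = ∫ θ in (0 : ℝ)..(Real.pi / 2),
      (1 - m ^ 2 * Real.sin θ ^ 2) ^ (-(1 : ℝ) / 2))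
    (hE : E = ∫ θ in (0 : ℝ)..(Real.pi / 2),
      (1 - m ^ 2 * Real.sin θ ^ 2) ^ ((1 : ℝ) / 2))
    (hb : b = (1 - m ^ 2) / m ^ 2 - E / (m ^ 2 * K))
    (hH1 : H1 = (18 * m ^ 4 / (1 - m ^ 2 + m ^ 4)) ^ ((1 : ℝ) / 2))
    (hH2 : H2 = (H1 ^ 3 / (162 * m ^ 6)) *
      (-2 + 3 * m ^ 2 + 3 * m ^ 4 - 2 * m ^ 6))
    (hH3 : H3 = (H1 / (3 * m ^ 2)) * (3 * E / K + m ^ 2 - 2))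
    (hrho : rhobar = (H1 / (m ^ 2 * K ^ 2)) *
      ((3 * H2 + 2 * H3) / (3 * H2 * H3 + 4)))
    (hrho0 : rhobar ≠ 0)
    (N n tau P lam nu mu gam eta kappa a : ℝ)
    (hN : 0 < N) (hn : 0 < n) (htau : tau < tau_s)
    (hP : P = (N / (2 * n)) * Real.sqrt (12 * (tau_s - tau)))
    (hlam : lam = 1) (hnu : nu = 1)
    (hmu : mu = -Real.sqrt (3 * v / 2))
    (hgam : gam = (3 / 2) * Real.sqrt (3 / (2 * v)))
    (heta : eta = (1 / 2) * Real.sqrt (3 / (2 * v)))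
    (hkappa : kappa = (K / P) ^ 4 * 144 * (m ^ 4 - m ^ 2 + 1) / 18)
    (ha : a = Real.sqrt kappa * H1)
    (s1 : ℝ)
    (hs1a : s1 = (180 / (7 * rhobar)) * (1 / P ^ 2) *
      (gam / eta - 2 * lam / nu) - 3 * mu / eta)
    (hs1b : s1 = -6 * (a * b + (a / (3 * m ^ 2)) * (3 * E / K + m ^ 2 - 2))) :
    tau = (2 * n ^ 2 / (3 * N ^ 2 * v)) *
        (15 / (7 * rhobar) + 6 * m ^ 2 * K ^ 2 *
          (b + (1 / (3 * m ^ 2)) * (3 * E / K + m ^ 2 - 2))) +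
      1 / (2 * v) := by
  obtain ⟨hm0, hm1⟩ := hm
  have hvne : v ≠ 0 := ne_of_gt hv
  have hmne : m ≠ 0 := ne_of_gt hm0
  have hdpos : 0 < 1 - m ^ 2 + m ^ 4 := by nlinarith
  have hdne : (1 - m ^ 2 + m ^ 4) ≠ 0 := ne_of_gt hdpos
  have hpos : 0 < tau_s - tau := by linarith
  have hsq : Real.sqrt (12 * (tau_s - tau)) ^ 2 = 12 * (tau_s - tau) :=
    Real.sq_sqrt (by linarith)
  have hPpos : 0 < P := by
    rw [hP]
    have h1 : 0 < Real.sqrt (12 * (tau_s - tau)) :=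
      Real.sqrt_pos.mpr (by linarith)
    positivity
  have hPne : P ≠ 0 := ne_of_gt hPpos
  have hP2 : P ^ 2 = 3 * N ^ 2 * (tau_s - tau) / n ^ 2 := by
    rw [hP, mul_pow, hsq]
    field_simp
    ring
  have hetapos : 0 < eta := by
    rw [heta]
    have h1 : 0 < Real.sqrt (3 / (2 * v)) :=
      Real.sqrt_pos.mpr (by positivity)
    positivity
  have hetane : eta ≠ 0 := ne_of_gt hetapos
  have hgam' : gam = 3 * eta := by rw [hgam, heta]; ring
  have hmu' : mu = -(2 * v) * eta := by
    rw [hmu, heta]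
    have h1 : v * Real.sqrt (3 / (2 * v)) = Real.sqrt (3 * v / 2) := by
      rw [← Real.sqrt_sq hv.le, ← Real.sqrt_mul (sq_nonneg v)]
      congr 1
      field_simp
      rw [Real.sqrt_sq hv.le]
    linear_combination h1
  have hkapnn : 0 ≤ kappa := by
    rw [hkappa]
    have h0 : 0 ≤ m ^ 4 - m ^ 2 + 1 := by nlinarith
    positivity
  have ha' : a = 12 * K ^ 2 * m ^ 2 / P ^ 2 := by
    rw [ha, hH1, ← Real.sqrt_eq_rpow, ← Real.sqrt_mul hkapnn]
    have heq : kappa * (18 * m ^ 4 / (1 - m ^ 2 + m ^ 4)) =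
        (12 * K ^ 2 * m ^ 2 / P ^ 2) ^ 2 := by
      rw [hkappa]
      field_simp
      ring
    rw [heq, Real.sqrt_sq (by positivity)]
  have haP : a * P ^ 2 = 12 * K ^ 2 * m ^ 2 := by
    rw [ha']
    field_simp
  have hge : gam / eta = 3 := by rw [hgam']; field_simp
  have hme : 3 * (-(2 * v) * eta) / eta = -(6 * v) := by field_simp; ring
  have hs1a' : s1 = 180 / (7 * rhobar) * (1 / P ^ 2) + 6 * v := by
    rw [hs1a, hge, hmu', hme, hlam, hnu]
    ring
  have hrne : (7 : ℝ) * rhobar ≠ 0 := mul_ne_zero (by norm_num) hrho0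
  have hs1P : s1 * P ^ 2 = 180 / (7 * rhobar) + 6 * v * P ^ 2 := by
    rw [hs1a']
    field_simp
  have key : v * P ^ 2 = -(12 * K ^ 2 * m ^ 2 *
      (b + (1 / (3 * m ^ 2)) * (3 * E / K + m ^ 2 - 2))) - 30 / (7 * rhobar) := by
    linear_combination (-(1 : ℝ)/6) * hs1P + (P ^ 2 / 6) * hs1b
      - (b + (3 * E / K + m ^ 2 - 2) / (3 * m ^ 2)) * haP
  have hnP : n ^ 2 * P ^ 2 = 3 * N ^ 2 * (tau_s - tau) := by
    rw [hP2]
    field_simp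
  have hmain : 3 * N ^ 2 * v * (tau_s - tau) =
      -(12 * n ^ 2 * K ^ 2 * m ^ 2 *
        (b + (1 / (3 * m ^ 2)) * (3 * E / K + m ^ 2 - 2)))
      - 30 * n ^ 2 / (7 * rhobar) := by
    linear_combination n ^ 2 * key - v * hnP
  have hNvne : (3 * N ^ 2 * v) ≠ 0 := by positivity
  have h5 : 3 * N ^ 2 * v * ((2 * n ^ 2 / (3 * N ^ 2 * v)) *
        (15 / (7 * rhobar) + 6 * m ^ 2 * K ^ 2 *
          (b + (1 / (3 * m ^ 2)) * (3 * E / K + m ^ 2 - 2))) + 1 / (2 * v)) =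
      3 * N ^ 2 * v * tau_s + 12 * n ^ 2 * K ^ 2 * m ^ 2 *
        (b + (1 / (3 * m ^ 2)) * (3 * E / K + m ^ 2 - 2))
      + 30 * n ^ 2 / (7 * rhobar) := by
    rw [htau_s]
    have hc : 3 * N ^ 2 * v * (2 * n ^ 2 / (3 * N ^ 2 * v)) = 2 * n ^ 2 := by
      field_simp
    have hc2 : 3 * N ^ 2 * v * (1 / (2 * v)) = 3 * N ^ 2 / 2 := by
      field_simp
    rw [mul_add, hc2, ← mul_assoc, hc]
    ring
  apply mul_left_cancel₀ hNvne
  rw [h5]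
  linear_combination -hmain
end
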